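/- Let $X_1, X_2, \ldots$ be i.i.d. real random variables with $S_0=0$, $S_n = X_1+\cdots+X_n$. Then for every $n \geq 1$, $\mathbb{P}(S_1 < 0, \ldots, S_{n-1} < 0, S_n = 0) = \mathbb{P}(S_1 > 0, \ldots, S_{n-1} > 0, S_n = 0)$. Consequently $\zeta := \sum_{n=1}^{\infty} \mathbb{P}(S_1 < 0, \ldots, S_{n-1} < 0, S_n = 0) = \sum_{n=1}^{\infty} \mathbb{P}(S_1 > 0, \ldots, S_{n-1} > 0, S_n = 0)$. -/

import Mathlib

open MeasureTheory ProbabilityTheory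
open scoped ENNReal

noncomputable def psum (n k : ℕ) (x : Fin n → ℝ) : ℝ :=
  ∑ i : Fin n, if (i : ℕ) < k then x i else 0

lemma psum_measurable (n k : ℕ) : Measurable (psum n k) := by
  refine Finset.measurable_sum _ fun i _ => ?_
  split_ifs
  · exact measurable_pi_apply i
  · exact measurable_const

lemma psum_zero (n : ℕ) (x : Fin n → ℝ) : psum n 0 x = 0 := by
  simp [psum]

lemma psum_rev (n k : ℕ) (hk : k ≤ n) (x : Fin n → ℝ) :
    psum n k (x ∘ Fin.rev) + psum n (n - k) x = psum n n x := by
  unfold psum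
  have h0 : ∑ i : Fin n, (if ((i : Fin n) : ℕ) < k then (x ∘ Fin.rev) i else 0)
      = ∑ i : Fin n, (if ((Fin.rev i : Fin n) : ℕ) < k then x i else 0) := by
    refine Fintype.sum_equiv Fin.revPerm _ _ fun i => ?_
    simp only [Fin.revPerm_apply, Function.comp_apply, Fin.rev_rev]
  rw [h0, ← Finset.sum_add_distrib]
  refine Finset.sum_congr rfl fun i _ => ?_
  have hi : (i : ℕ) < n := i.isLt
  have hrev : ((Fin.rev i : Fin n) : ℕ) = n - ((i : ℕ) + 1) := Fin.val_rev i
  rw [hrev, if_pos hi]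
  rcases lt_or_ge ((i : ℕ)) (n - k) with h | h
  · rw [if_neg (by omega), if_pos h, zero_add]
  · rw [if_pos (by omega), if_neg (by omega), add_zero]

lemma psum_set_measurable (n m : ℕ) :
    MeasurableSet {x : Fin n → ℝ |
      (∀ k, 1 ≤ k → k ≤ m → psum n k x < 0) ∧ psum n (n : ℕ) x = 0} := by
  have h2 : MeasurableSet {x : Fin n → ℝ | psum n n x = 0} :=
    (psum_measurable n n) (measurableSet_singleton (0 : ℝ))
  have h1 : MeasurableSet {x : Fin n → ℝ | ∀ k, 1 ≤ k → k ≤ m → psum n k x < 0} := by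
    rw [Set.setOf_forall]
    refine MeasurableSet.iInter fun k => ?_
    by_cases hk : 1 ≤ k ∧ k ≤ m
    · have : {x : Fin n → ℝ | 1 ≤ k → k ≤ m → psum n k x < 0}
          = {x | psum n k x < 0} := by
        ext x; simp [hk.1, hk.2]
      rw [this]
      exact measurableSet_lt (psum_measurable n k) measurable_const
    · have : {x : Fin n → ℝ | 1 ≤ k → k ≤ m → psum n k x < 0} = Set.univ := by
        ext x; simp only [Set.mem_setOf_eq, Set.mem_univ, iff_true]
        intro a b; exact absurd ⟨a, b⟩ hk
      rw [this]; exact MeasurableSet.univ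
  rw [Set.setOf_and]
  exact h1.inter h2

lemma psum_pos_set_measurable (n m : ℕ) :
    MeasurableSet {x : Fin n → ℝ |
      (∀ k, 1 ≤ k → k ≤ m → 0 < psum n k x) ∧ psum n (n : ℕ) x = 0} := by
  have h2 : MeasurableSet {x : Fin n → ℝ | psum n n x = 0} :=
    (psum_measurable n n) (measurableSet_singleton (0 : ℝ))
  have h1 : MeasurableSet {x : Fin n → ℝ | ∀ k, 1 ≤ k → k ≤ m → 0 < psum n k x} := by
    rw [Set.setOf_forall]
    refine MeasurableSet.iInter fun k => ?_
    by_cases hk : 1 ≤ k ∧ k ≤ m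
    · have : {x : Fin n → ℝ | 1 ≤ k → k ≤ m → 0 < psum n k x}
          = {x | 0 < psum n k x} := by
        ext x; simp [hk.1, hk.2]
      rw [this]
      exact measurableSet_lt measurable_const (psum_measurable n k)
    · have : {x : Fin n → ℝ | 1 ≤ k → k ≤ m → 0 < psum n k x} = Set.univ := by
        ext x; simp only [Set.mem_setOf_eq, Set.mem_univ, iff_true]
        intro a b; exact absurd ⟨a, b⟩ hk
      rw [this]; exact MeasurableSet.univ
  rw [Set.setOf_and]
  exact h1.inter h2

lemma pi_rev_invariant (n : ℕ) (ν : Measure ℝ) [IsProbabilityMeasure ν] :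
    (Measure.pi fun _ : Fin n => ν).map (fun x => x ∘ Fin.rev) = Measure.pi fun _ : Fin n => ν := by
  have hmeas : Measurable fun x : Fin n → ℝ => x ∘ Fin.rev :=
    measurable_pi_lambda _ fun i => measurable_pi_apply _
  refine (Measure.pi_eq fun s hs => ?_).symm
  rw [Measure.map_apply hmeas (MeasurableSet.univ_pi hs)]
  have hpre : (fun x : Fin n → ℝ => x ∘ Fin.rev) ⁻¹' Set.pi Set.univ s
      = Set.pi Set.univ (fun j => s (Fin.rev j)) := by
    ext x
    simp only [Set.mem_preimage, Set.mem_pi, Set.mem_univ, true_implies, Function.comp_apply]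
    constructor
    · intro h j
      have := h (Fin.rev j); rwa [Fin.rev_rev] at this
    · intro h i
      have := h (Fin.rev i); rwa [Fin.rev_rev] at this
  rw [hpre, Measure.pi_pi]
  exact Equiv.prod_comp Fin.revPerm fun i => ν (s i)

lemma joint_law_eq_pi {Ω : Type*} [MeasurableSpace Ω] (μ : Measure Ω)
    [IsProbabilityMeasure μ] (X : ℕ → Ω → ℝ) (hmeas : ∀ i, Measurable (X i))
    (hindep : iIndepFun X μ)
    (hident : ∀ i, IdentDistrib (X i) (X 0) μ μ) (n : ℕ) :
    μ.map (fun ω (i : Fin n) => X i ω) = Measure.pi fun _ : Fin n => μ.map (X 0) := by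
  have hν : IsProbabilityMeasure (μ.map (X 0)) := Measure.isProbabilityMeasure_map (hmeas 0).aemeasurable
  have hvec : Measurable fun ω (i : Fin n) => X i ω :=
    measurable_pi_lambda _ fun i => hmeas i
  refine (Measure.pi_eq fun s hs => ?_).symm
  rw [Measure.map_apply hvec (MeasurableSet.univ_pi hs)]
  -- extend s to a ℕ-indexed family
  set t : ℕ → Set ℝ := fun i => if h : i < n then s ⟨i, h⟩ else Set.univ with ht
  have htm : ∀ i, i ∈ Finset.range n → MeasurableSet (t i) := by
    intro i hi
    rw [Finset.mem_range] at hi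
    simp only [ht, dif_pos hi]
    exact hs _
  have hpre : (fun ω (i : Fin n) => X i ω) ⁻¹' Set.pi Set.univ s
      = ⋂ i ∈ Finset.range n, X i ⁻¹' t i := by
    ext ω
    simp only [Set.mem_preimage, Set.mem_pi, Set.mem_univ, true_implies, Set.mem_iInter,
      Finset.mem_range]
    constructor
    · intro h i hi
      simp only [ht, dif_pos hi]; exact h ⟨i, hi⟩
    · intro h i
      have := h (i : ℕ) i.isLt
      simpa only [ht, dif_pos i.isLt] using this
  rw [hpre, hindep.measure_inter_preimage_eq_mul (Finset.range n) htm]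
  have : ∀ i ∈ Finset.range n, μ (X i ⁻¹' t i) = (μ.map (X 0)) (t i) := by
    intro i hi
    rw [← (hident i).map_eq, Measure.map_apply (hmeas i) (htm i hi)]
  rw [Finset.prod_congr rfl this]
  rw [Finset.prod_range fun i => (μ.map (X 0)) (t i)]
  refine Finset.prod_congr rfl fun i _ => ?_
  simp only [ht, dif_pos i.isLt]

/-- For a random walk with i.i.d. increments,
`P(S_1 < 0, …, S_{n-1} < 0, S_n = 0) = P(S_1 > 0, …, S_{n-1} > 0, S_n = 0)`
for every `n ≥ 1`, and hence the corresponding series agree. -/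
theorem negative_excursion_prob_eq_positive {Ω : Type*} [MeasurableSpace Ω] (μ : Measure Ω)
    [IsProbabilityMeasure μ] (X : ℕ → Ω → ℝ) (hmeas : ∀ i, Measurable (X i))
    (hindep : iIndepFun X μ)
    (hident : ∀ i, IdentDistrib (X i) (X 0) μ μ)
    (S : ℕ → Ω → ℝ) (hS : ∀ n ω, S n ω = ∑ i ∈ Finset.range n, X i ω) :
    (∀ n : ℕ, 1 ≤ n →
      μ {ω | (∀ k, 1 ≤ k → k ≤ n - 1 → S k ω < 0) ∧ S n ω = 0}
        = μ {ω | (∀ k, 1 ≤ k → k ≤ n - 1 → 0 < S k ω) ∧ S n ω = 0}) ∧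
    (∑' n : ℕ, μ {ω | (∀ k, 1 ≤ k → k ≤ (n + 1) - 1 → S k ω < 0) ∧ S (n + 1) ω = 0})
      = ∑' n : ℕ, μ {ω | (∀ k, 1 ≤ k → k ≤ (n + 1) - 1 → 0 < S k ω) ∧ S (n + 1) ω = 0} := by
  have hν : IsProbabilityMeasure (μ.map (X 0)) := Measure.isProbabilityMeasure_map (hmeas 0).aemeasurable
  have key : ∀ n : ℕ, 1 ≤ n →
      μ {ω | (∀ k, 1 ≤ k → k ≤ n - 1 → S k ω < 0) ∧ S n ω = 0}
        = μ {ω | (∀ k, 1 ≤ k → k ≤ n - 1 → 0 < S k ω) ∧ S n ω = 0} := by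
    intro n hn
    set vec : Ω → Fin n → ℝ := fun ω i => X i ω with hvecdef
    have hvec : Measurable vec := measurable_pi_lambda _ fun i => hmeas i
    have hrevm : Measurable fun x : Fin n → ℝ => x ∘ Fin.rev :=
      measurable_pi_lambda _ fun i => measurable_pi_apply _
    have hSk : ∀ k, k ≤ n → ∀ ω, S k ω = psum n k (vec ω) := by
      intro k hk ω
      rw [hS k ω]
      have h1 : psum n k (vec ω) = ∑ i ∈ Finset.range n, (if i < k then X i ω else 0) := by
        unfold psum
        exact Fin.sum_univ_eq_sum_range (fun i => if i < k then X i ω else 0) n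
      rw [h1]
      rw [← Finset.sum_subset (Finset.range_subset_range.2 hk)
        (fun i _ hik => if_neg (by simpa using hik))]
      exact Finset.sum_congr rfl fun i hi => (if_pos (Finset.mem_range.mp hi)).symm
    have hAneg := psum_set_measurable n (n - 1)
    have hApos := psum_pos_set_measurable n (n - 1)
    have hEneg : {ω | (∀ k, 1 ≤ k → k ≤ n - 1 → S k ω < 0) ∧ S n ω = 0}
        = vec ⁻¹' {x : Fin n → ℝ |
            (∀ k, 1 ≤ k → k ≤ n - 1 → psum n k x < 0) ∧ psum n n x = 0} := by
      ext ω
      simp only [Set.mem_setOf_eq, Set.mem_preimage]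
      constructor
      · rintro ⟨h, hz⟩
        exact ⟨fun k h1 h2 => by rw [← hSk k (by omega) ω]; exact h k h1 h2,
          by rw [← hSk n le_rfl ω]; exact hz⟩
      · rintro ⟨h, hz⟩
        exact ⟨fun k h1 h2 => by rw [hSk k (by omega) ω]; exact h k h1 h2,
          by rw [hSk n le_rfl ω]; exact hz⟩
    have hEpos : {ω | (∀ k, 1 ≤ k → k ≤ n - 1 → 0 < S k ω) ∧ S n ω = 0}
        = vec ⁻¹' {x : Fin n → ℝ |
            (∀ k, 1 ≤ k → k ≤ n - 1 → 0 < psum n k x) ∧ psum n n x = 0} := by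
      ext ω
      simp only [Set.mem_setOf_eq, Set.mem_preimage]
      constructor
      · rintro ⟨h, hz⟩
        exact ⟨fun k h1 h2 => by rw [← hSk k (by omega) ω]; exact h k h1 h2,
          by rw [← hSk n le_rfl ω]; exact hz⟩
      · rintro ⟨h, hz⟩
        exact ⟨fun k h1 h2 => by rw [hSk k (by omega) ω]; exact h k h1 h2,
          by rw [hSk n le_rfl ω]; exact hz⟩
    have hset : (fun x : Fin n → ℝ => x ∘ Fin.rev) ⁻¹'
          {x : Fin n → ℝ | (∀ k, 1 ≤ k → k ≤ n - 1 → psum n k x < 0) ∧ psum n n x = 0}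
        = {x : Fin n → ℝ | (∀ k, 1 ≤ k → k ≤ n - 1 → 0 < psum n k x) ∧ psum n n x = 0} := by
      ext x
      simp only [Set.mem_preimage, Set.mem_setOf_eq]
      have htop : psum n n (x ∘ Fin.rev) = psum n n x := by
        have h0 := psum_rev n n le_rfl x
        rw [Nat.sub_self, psum_zero] at h0
        linarith
      constructor
      · rintro ⟨h, hz⟩
        rw [htop] at hz
        refine ⟨fun k h1 h2 => ?_, hz⟩
        have hlt := h (n - k) (by omega) (by omega)
        have hpr := psum_rev n (n - k) (by omega) x
        have hnk : n - (n - k) = k := by omega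
        rw [hnk, hz] at hpr
        linarith
      · rintro ⟨h, hz⟩
        refine ⟨fun k h1 h2 => ?_, by rw [htop]; exact hz⟩
        have hpr := psum_rev n k (by omega) x
        rw [hz] at hpr
        have hp := h (n - k) (by omega) (by omega)
        linarith
    calc μ {ω | (∀ k, 1 ≤ k → k ≤ n - 1 → S k ω < 0) ∧ S n ω = 0}
        = (μ.map vec) {x : Fin n → ℝ |
            (∀ k, 1 ≤ k → k ≤ n - 1 → psum n k x < 0) ∧ psum n n x = 0} := by
          rw [Measure.map_apply hvec hAneg, hEneg]
      _ = (Measure.pi fun _ : Fin n => μ.map (X 0)) {x : Fin n → ℝ |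
            (∀ k, 1 ≤ k → k ≤ n - 1 → psum n k x < 0) ∧ psum n n x = 0} := by
          rw [joint_law_eq_pi μ X hmeas hindep hident n]
      _ = ((Measure.pi fun _ : Fin n => μ.map (X 0)).map fun x => x ∘ Fin.rev)
            {x : Fin n → ℝ |
            (∀ k, 1 ≤ k → k ≤ n - 1 → psum n k x < 0) ∧ psum n n x = 0} := by
          rw [pi_rev_invariant n (μ.map (X 0))]
      _ = (Measure.pi fun _ : Fin n => μ.map (X 0)) {x : Fin n → ℝ |
            (∀ k, 1 ≤ k → k ≤ n - 1 → 0 < psum n k x) ∧ psum n n x = 0} := by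
          rw [Measure.map_apply hrevm hAneg, hset]
      _ = (μ.map vec) {x : Fin n → ℝ |
            (∀ k, 1 ≤ k → k ≤ n - 1 → 0 < psum n k x) ∧ psum n n x = 0} := by
          rw [joint_law_eq_pi μ X hmeas hindep hident n]
      _ = μ {ω | (∀ k, 1 ≤ k → k ≤ n - 1 → 0 < S k ω) ∧ S n ω = 0} := by
          rw [Measure.map_apply hvec hApos, hEpos]
  refine ⟨key, ?_⟩
  exact tsum_congr fun n => key (n + 1) (Nat.le_add_left 1 n)
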